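/- Let k > 1 and v ∈ ℝ. Define n*(C) = (k−1)v / ((k−3) + 2/C) and ℓ(C) = (k−1)(n*(C) − v)² − 2 n*(C)² + 2 n*(C)²/C for C ∈ (0, 1]. Then ℓ is differentiable on (0,1] with ℓ′(C) = −2(k−1)²v² / ((k−3)C + 2)² for every C ∈ (0,1]. -/

import Mathlib

/-- The optimal squared embedding length `n*(C) = (k-1)v / ((k-3) + 2/C)` for a single
feature of importance `v` at capacity `C`. -/
noncomputable def nstar (k v C : ℝ) : ℝ := (k - 1) * v / ((k - 3) + 2 / C)

/-- The single-feature loss after minimizing over the squared embedding length: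
`ℓ(C) = (k-1)(n*(C) - v)² - 2 n*(C)² + 2 n*(C)²/C`. -/
noncomputable def lossC (k v C : ℝ) : ℝ :=
  (k - 1) * (nstar k v C - v) ^ 2 - 2 * (nstar k v C) ^ 2 + 2 * (nstar k v C) ^ 2 / C

/-- For `k > 1`, the minimized single-feature loss `ℓ` is differentiable on
`(0, 1]` with `ℓ'(C) = -2(k-1)²v² / ((k-3)C + 2)²`. -/
theorem lossC_hasDerivAt (k v : ℝ) (hk : 1 < k) :
    ∀ C ∈ Set.Ioc (0 : ℝ) 1,
      HasDerivAt (lossC k v) (-2 * (k - 1) ^ 2 * v ^ 2 / ((k - 3) * C + 2) ^ 2) C := by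
  intro C hC
  obtain ⟨hC0, hC1⟩ := hC
  have hD : (0:ℝ) < (k - 3) * C + 2 := by nlinarith
  have hg : HasDerivAt (fun x => 2*(k-1)*v^2*(1-x) / ((k-3)*x+2))
      (-2 * (k - 1) ^ 2 * v ^ 2 / ((k - 3) * C + 2) ^ 2) C := by
    have h1 : HasDerivAt (fun x : ℝ => 2*(k-1)*v^2*(1-x)) (-(2*(k-1)*v^2)) C := by
      simpa using ((hasDerivAt_id C).const_sub 1).const_mul (2*(k-1)*v^2)
    have h2 : HasDerivAt (fun x : ℝ => (k-3)*x+2) (k-3) C := by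
      simpa using ((hasDerivAt_id C).const_mul (k-3)).add_const 2
    have : HasDerivAt (fun x => 2*(k-1)*v^2*(1-x) / ((k-3)*x+2)) _ C := h1.div h2 hD.ne'
    convert this using 1
    field_simp
    ring
  apply hg.congr_of_eventuallyEq
  have hopen : IsOpen {x : ℝ | x ≠ 0 ∧ (k-3)*x+2 ≠ 0} := by
    apply IsOpen.inter
    · exact isOpen_ne
    · exact IsOpen.preimage (by continuity) isOpen_compl_singleton
  filter_upwards [hopen.mem_nhds ⟨hC0.ne', hD.ne'⟩] with x hx
  obtain ⟨hx0, hxD⟩ := hx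
  unfold lossC nstar
  have hden : (k-3) + 2/x = ((k-3)*x+2)/x := by field_simp
  rw [hden]
  field_simp
  ring
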